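/- arXiv:2011.09998 — 10 statements merged into one kernel-verified Lean document; each statement's English description precedes it below -/
import Mathlib

section
/- With the MNL revenue setup, let $S^*$ be the unique optimal assortment of size at most $K$ with optimal revenue $\theta^*$, and let $u_i = v_i(r_i - \theta^*)$. Then $S^*$ equals the set of items $i \in [N]$ such that $u_i > 0$ and $u_i$ is among the top $K$ values of $\{u_j\}_{j \in [N]}$; equivalently, $S^* = \arg\max_{|S| \le K} \sum_{i \in S} u_i$. -/
open Finset

/-- With the MNL revenue setup and the unique optimal assortment `Sstar`
of size at most `K`, the advantage scores `u i = v i * (r i - θ)` characterize `Sstar`: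
it is exactly the set of items with positive scores among the top `K` scores, and
equivalently `Sstar` maximizes `∑ i ∈ S, u i` over assortments of size at most `K`. -/
theorem mnl_optimal_assortment_eq_positive_topK
    (N K : ℕ) (hN : 0 < N) (hK : 0 < K)
    (v r : Fin N → ℝ)
    (hv : ∀ i, v i ∈ Set.Icc (0 : ℝ) 1) (hr : ∀ i, r i ∈ Set.Icc (0 : ℝ) 1)
    (R : Finset (Fin N) → ℝ)
    (hR : ∀ S : Finset (Fin N), R S = (∑ i ∈ S, v i * r i) / (1 + ∑ i ∈ S, v i))
    (Sstar : Finset (Fin N)) (hScard : Sstar.card ≤ K)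
    (hopt : ∀ S : Finset (Fin N), S.card ≤ K → R S ≤ R Sstar)
    (huniq : ∀ S : Finset (Fin N), S.card ≤ K → R S = R Sstar → S = Sstar)
    (θ : ℝ) (hθ : θ = R Sstar)
    (u : Fin N → ℝ) (hu : ∀ i, u i = v i * (r i - θ)) :
    Sstar = univ.filter (fun i : Fin N =>
        0 < u i ∧ (univ.filter (fun j : Fin N => u i < u j)).card < K) ∧
    (∀ S : Finset (Fin N), S.card ≤ K → ∑ i ∈ S, u i ≤ ∑ i ∈ Sstar, u i) := by
  have hD : ∀ S : Finset (Fin N), 0 < 1 + ∑ i ∈ S, v i := by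
    intro S
    have : (0:ℝ) ≤ ∑ i ∈ S, v i := Finset.sum_nonneg fun i _ => (hv i).1
    linarith
  have key : ∀ S : Finset (Fin N),
      ∑ i ∈ S, u i - θ = (R S - θ) * (1 + ∑ i ∈ S, v i) := by
    intro S
    have hRS : R S * (1 + ∑ i ∈ S, v i) = ∑ i ∈ S, v i * r i := by
      rw [hR S, div_mul_cancel₀ _ (ne_of_gt (hD S))]
    have hsum : ∑ i ∈ S, u i = (∑ i ∈ S, v i * r i) - θ * ∑ i ∈ S, v i := by
      have h1 : ∑ i ∈ S, u i = ∑ i ∈ S, (v i * r i - θ * v i) :=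
        Finset.sum_congr rfl fun i _ => by rw [hu i]; ring
      rw [h1, Finset.sum_sub_distrib, ← Finset.mul_sum]
    rw [hsum, ← hRS]; ring
  have hstar : ∑ i ∈ Sstar, u i = θ := by
    have := key Sstar
    rw [← hθ] at this
    have : ∑ i ∈ Sstar, u i - θ = 0 := by rw [this]; ring
    linarith
  have hle : ∀ S : Finset (Fin N), S.card ≤ K → ∑ i ∈ S, u i ≤ θ := by
    intro S hS
    have h1 : R S - θ ≤ 0 := by have := hopt S hS; rw [hθ]; linarith
    have := key S
    nlinarith [hD S]
  have heq : ∀ S : Finset (Fin N), S.card ≤ K → ∑ i ∈ S, u i = θ → S = Sstar := by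
    intro S hS h
    have hk := key S
    rw [h] at hk
    have h0 : (R S - θ) * (1 + ∑ i ∈ S, v i) = 0 := by linarith
    have hne : (1 + ∑ i ∈ S, v i) ≠ 0 := ne_of_gt (hD S)
    have : R S = θ := by
      rcases mul_eq_zero.mp h0 with h' | h'
      · linarith
      · exact absurd h' hne
    exact huniq S hS (by rw [this, hθ])
  constructor
  · ext i
    simp only [Finset.mem_filter, Finset.mem_univ, true_and]
    constructor
    · intro hi
      have hui : 0 < u i := by
        by_contra hpos
        push_neg at hpos
        set S' := Sstar.erase i with hS'
        have hcard : S'.card ≤ K := le_trans (Finset.card_le_card (Finset.erase_subset _ _)) hScard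
        have hsum' : ∑ j ∈ S', u j = θ - u i := by
          rw [hS', Finset.sum_erase_eq_sub hi, hstar]
        have h1 : ∑ j ∈ S', u j ≤ θ := hle S' hcard
        have h2 : ∑ j ∈ S', u j = θ := by linarith
        have := heq S' hcard h2
        have h3 : i ∈ S' := by rw [this]; exact hi
        exact Finset.notMem_erase i Sstar h3
      refine ⟨hui, ?_⟩
      by_contra hbig
      push_neg at hbig
      set A := univ.filter (fun j : Fin N => u i < u j) with hA
      have hiA : i ∉ A := by simp [hA]
      have hAS : ¬ A ⊆ Sstar := by
        intro hsub
        have : A ⊆ Sstar.erase i := fun j hj =>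
          Finset.mem_erase.mpr ⟨fun h => hiA (h ▸ hj), hsub hj⟩
        have := Finset.card_le_card this
        have hce : (Sstar.erase i).card = Sstar.card - 1 := Finset.card_erase_of_mem hi
        omega
      obtain ⟨j, hjA, hjS⟩ := Finset.not_subset.mp hAS
      have hji : u i < u j := by simpa [hA] using hjA
      set S' := insert j (Sstar.erase i) with hS'
      have hjni : j ∉ Sstar.erase i := fun h => hjS (Finset.mem_of_mem_erase h)
      have hcard : S'.card ≤ K := by
        rw [hS', Finset.card_insert_of_notMem hjni, Finset.card_erase_of_mem hi]
        omega
      have hsum' : ∑ x ∈ S', u x = u j + (θ - u i) := by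
        rw [hS', Finset.sum_insert hjni, Finset.sum_erase_eq_sub hi, hstar]
      have := hle S' hcard
      linarith
    · rintro ⟨hui, hcardA⟩
      by_contra hiS
      set A := univ.filter (fun j : Fin N => u i < u j) with hA
      rcases lt_or_eq_of_le hScard with hlt | heqK
      · set S' := insert i Sstar with hS'
        have hcard : S'.card ≤ K := by
          rw [hS', Finset.card_insert_of_notMem hiS]; omega
        have hsum' : ∑ x ∈ S', u x = u i + θ := by
          rw [hS', Finset.sum_insert hiS, hstar]
        have := hle S' hcard
        linarith
      · have hSA : ¬ Sstar ⊆ A := by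
          intro hsub
          have := Finset.card_le_card hsub
          omega
        obtain ⟨m, hmS, hmA⟩ := Finset.not_subset.mp hSA
        have hmu : u m ≤ u i := by
          by_contra h
          exact hmA (by simp [hA]; linarith)
        set S' := insert i (Sstar.erase m) with hS'
        have hini : i ∉ Sstar.erase m := fun h => hiS (Finset.mem_of_mem_erase h)
        have hcard : S'.card ≤ K := by
          rw [hS', Finset.card_insert_of_notMem hini, Finset.card_erase_of_mem hmS]
          omega
        have hsum' : ∑ x ∈ S', u x = u i + (θ - u m) := by
          rw [hS', Finset.sum_insert hini, Finset.sum_erase_eq_sub hmS, hstar]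
        have h1 := hle S' hcard
        have h2 : ∑ x ∈ S', u x = θ := by linarith
        have := heq S' hcard h2
        have : i ∈ Sstar := this ▸ (Finset.mem_insert_self i _)
        exact hiS this
  · intro S hS
    rw [hstar]
    exact hle S hS
end

section
/- Revenue Comparison Lemma: For any assortment $S \subseteq [N]$, one has $(1 + \sum_{i \in S} v_i)(\theta^* - R(S)) = \sum_{i \in S^* \setminus S} u_i - \sum_{i \in S \setminus S^*} u_i$, where $u_i = v_i(r_i - \theta^*)$ and $\theta^* = \sum_{i \in S^*} u_i$. -/
open Finset

/-- Revenue Comparison Lemma: For any assortment `S`,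
`(1 + ∑ i ∈ S, v i) * (θ - R S) = ∑ i ∈ Sstar \ S, u i - ∑ i ∈ S \ Sstar, u i`,
where `u i = v i * (r i - θ)` and `θ = R Sstar = ∑ i ∈ Sstar, u i`. -/
theorem mnl_revenue_comparison
    (N : ℕ) (v r : Fin N → ℝ)
    (hv : ∀ i, v i ∈ Set.Icc (0 : ℝ) 1) (hr : ∀ i, r i ∈ Set.Icc (0 : ℝ) 1)
    (R : Finset (Fin N) → ℝ)
    (hR : ∀ S : Finset (Fin N), R S = (∑ i ∈ S, v i * r i) / (1 + ∑ i ∈ S, v i))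
    (Sstar : Finset (Fin N)) (θ : ℝ) (hθR : θ = R Sstar)
    (u : Fin N → ℝ) (hu : ∀ i, u i = v i * (r i - θ))
    (hθu : θ = ∑ i ∈ Sstar, u i)
    (S : Finset (Fin N)) :
    (1 + ∑ i ∈ S, v i) * (θ - R S) = ∑ i ∈ Sstar \ S, u i - ∑ i ∈ S \ Sstar, u i := by
  have hpos : (0:ℝ) < 1 + ∑ i ∈ S, v i := by
    have : (0:ℝ) ≤ ∑ i ∈ S, v i := Finset.sum_nonneg fun i _ => (hv i).1
    linarith
  have key : (1 + ∑ i ∈ S, v i) * (θ - R S) = θ - ∑ i ∈ S, u i := by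
    rw [hR]
    field_simp
    simp only [hu, mul_sub, Finset.sum_sub_distrib, Finset.mul_sum]
    have : ∑ x ∈ S, v x * θ = θ * ∑ x ∈ S, v x := by
      rw [Finset.mul_sum]; exact Finset.sum_congr rfl fun i _ => mul_comm _ _
    rw [this]; ring
  rw [key, hθu]
  have h1 := Finset.sum_inter_add_sum_sdiff Sstar S u
  have h2 := Finset.sum_inter_add_sum_sdiff S Sstar u
  rw [Finset.inter_comm] at h2
  linarith
end

section
/- Suppose $i \in S^*$ and $j \notin S^*$, and let $\Delta_i = \theta^* - \max_{|S| \le K, i \notin S} R(S)$ be the suboptimality gap of item $i$. Then $\Delta_i \le u_i - u_j$ and $\Delta_i \le u_i$, where $u_\ell = v_\ell(r_\ell - \theta^*)$. -/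
open Finset

/-- For `i ∈ Sstar` and `j ∉ Sstar`, the suboptimality gap
`Δᵢ = θ - max_{|S| ≤ K, i ∉ S} R S` satisfies `Δᵢ ≤ u i - u j` and `Δᵢ ≤ u i`,
where `u ℓ = v ℓ * (r ℓ - θ)`. -/
theorem mnl_gap_le_advantage_diff_of_mem
    (N K : ℕ) (hK : 0 < K)
    (v r : Fin N → ℝ)
    (hv : ∀ i, v i ∈ Set.Icc (0 : ℝ) 1) (hr : ∀ i, r i ∈ Set.Icc (0 : ℝ) 1)
    (R : Finset (Fin N) → ℝ)
    (hR : ∀ S : Finset (Fin N), R S = (∑ i ∈ S, v i * r i) / (1 + ∑ i ∈ S, v i))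
    (Sstar : Finset (Fin N)) (hScard : Sstar.card ≤ K)
    (hopt : ∀ S : Finset (Fin N), S.card ≤ K → R S ≤ R Sstar)
    (θ : ℝ) (hθ : θ = R Sstar)
    (u : Fin N → ℝ) (hu : ∀ ℓ, u ℓ = v ℓ * (r ℓ - θ))
    (i j : Fin N) (hi : i ∈ Sstar) (hj : j ∉ Sstar)
    (hne : ((univ : Finset (Fin N)).powerset.filter
        (fun S => S.card ≤ K ∧ i ∉ S)).Nonempty)
    (Δi : ℝ)
    (hΔ : Δi = θ - ((univ : Finset (Fin N)).powerset.filter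
        (fun S => S.card ≤ K ∧ i ∉ S)).sup' hne R) :
    Δi ≤ u i - u j ∧ Δi ≤ u i := by
  have hvnn : ∀ ℓ, 0 ≤ v ℓ := fun ℓ => (hv ℓ).1
  have hsumnn : ∀ (S : Finset (Fin N)), (0:ℝ) ≤ ∑ k ∈ S, v k :=
    fun S => Finset.sum_nonneg fun k _ => hvnn k
  have hBpos : (0:ℝ) < 1 + ∑ k ∈ Sstar, v k := by linarith [hsumnn Sstar]
  have hθB : θ * (1 + ∑ k ∈ Sstar, v k) = ∑ k ∈ Sstar, v k * r k := by
    rw [hθ, hR]; field_simp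
  set T1 := Sstar.erase i with hT1
  set T2 := insert j T1 with hT2
  have hjT1 : j ∉ T1 := fun h => hj (Finset.mem_of_mem_erase h)
  have hiT1 : i ∉ T1 := Finset.notMem_erase i Sstar
  have hij : i ≠ j := fun h => hj (h ▸ hi)
  have hiT2 : i ∉ T2 := by
    simp only [hT2, Finset.mem_insert]
    push_neg
    exact ⟨hij, hiT1⟩
  have hs1v : ∑ k ∈ T1, v k = (∑ k ∈ Sstar, v k) - v i :=
    Finset.sum_erase_eq_sub hi
  have hs1vr : ∑ k ∈ T1, v k * r k = (∑ k ∈ Sstar, v k * r k) - v i * r i :=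
    Finset.sum_erase_eq_sub hi
  have hs2v : ∑ k ∈ T2, v k = v j + ((∑ k ∈ Sstar, v k) - v i) := by
    rw [hT2, Finset.sum_insert hjT1, hs1v]
  have hs2vr : ∑ k ∈ T2, v k * r k = v j * r j + ((∑ k ∈ Sstar, v k * r k) - v i * r i) := by
    rw [hT2, Finset.sum_insert hjT1, hs1vr]
  have hd1pos : (0:ℝ) < 1 + ∑ k ∈ T1, v k := by linarith [hsumnn T1]
  have hd2pos : (0:ℝ) < 1 + ∑ k ∈ T2, v k := by linarith [hsumnn T2]
  have hd1ge : (1:ℝ) ≤ 1 + ∑ k ∈ T1, v k := by linarith [hsumnn T1]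
  have hd2ge : (1:ℝ) ≤ 1 + ∑ k ∈ T2, v k := by linarith [hsumnn T2]
  -- exact expressions for the gaps
  have e1 : θ - R T1 = u i / (1 + ∑ k ∈ T1, v k) := by
    rw [hR, hu, hs1v, hs1vr]
    rw [hs1v] at hd1pos
    field_simp
    ring_nf
    nlinarith [hθB]
  have e2 : θ - R T2 = (u i - u j) / (1 + ∑ k ∈ T2, v k) := by
    rw [hR, hu i, hu j, hs2v, hs2vr]
    rw [hs2v] at hd2pos
    field_simp
    ring_nf
    nlinarith [hθB]
  -- cardinalities
  have hc1 : T1.card ≤ K := le_trans (le_trans (Finset.card_erase_le) hScard) le_rfl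
  have hc2 : T2.card ≤ K := by
    rw [hT2, Finset.card_insert_of_notMem hjT1, hT1, Finset.card_erase_of_mem hi]
    have : 1 ≤ Sstar.card := Finset.card_pos.mpr ⟨i, hi⟩
    omega
  -- optimality bounds
  have hle1 : R T1 ≤ θ := by rw [hθ]; exact hopt T1 hc1
  have hle2 : R T2 ≤ θ := by rw [hθ]; exact hopt T2 hc2
  have hui : 0 ≤ u i := by
    by_contra h
    push_neg at h
    have : u i / (1 + ∑ k ∈ T1, v k) < 0 := div_neg_of_neg_of_pos h hd1pos
    linarith [e1, hle1]
  have huij : 0 ≤ u i - u j := by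
    by_contra h
    push_neg at h
    have : (u i - u j) / (1 + ∑ k ∈ T2, v k) < 0 := div_neg_of_neg_of_pos (by linarith) hd2pos
    linarith [e2, hle2]
  -- membership in the filtered family
  have hm1 : T1 ∈ ((univ : Finset (Fin N)).powerset.filter
      (fun S => S.card ≤ K ∧ i ∉ S)) := by
    simp only [Finset.mem_filter, Finset.mem_powerset]
    exact ⟨Finset.subset_univ _, hc1, hiT1⟩
  have hm2 : T2 ∈ ((univ : Finset (Fin N)).powerset.filter
      (fun S => S.card ≤ K ∧ i ∉ S)) := by
    simp only [Finset.mem_filter, Finset.mem_powerset]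
    exact ⟨Finset.subset_univ _, hc2, hiT2⟩
  have hsup1 : R T1 ≤ ((univ : Finset (Fin N)).powerset.filter
      (fun S => S.card ≤ K ∧ i ∉ S)).sup' hne R := Finset.le_sup' R hm1
  have hsup2 : R T2 ≤ ((univ : Finset (Fin N)).powerset.filter
      (fun S => S.card ≤ K ∧ i ∉ S)).sup' hne R := Finset.le_sup' R hm2
  constructor
  · have : Δi ≤ θ - R T2 := by rw [hΔ]; linarith
    rw [e2] at this
    calc Δi ≤ (u i - u j) / (1 + ∑ k ∈ T2, v k) := this
      _ ≤ u i - u j := div_le_self huij hd2ge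
  · have : Δi ≤ θ - R T1 := by rw [hΔ]; linarith
    rw [e1] at this
    calc Δi ≤ u i / (1 + ∑ k ∈ T1, v k) := this
      _ ≤ u i := div_le_self hui hd1ge
end

section
/- Suppose $i \notin S^*$ and $j \in S^*$, and let $\Delta_i = \theta^* - \max_{|S| \le K, i \in S} R(S)$. Then $\Delta_i \le u_j - u_i$. If in addition $|S^*| < K$, then $\Delta_i \le -u_i$. -/
open Finset

/-- For `i ∉ Sstar` and `j ∈ Sstar`, the suboptimality gap
`Δᵢ = θ - max_{|S| ≤ K, i ∈ S} R S` satisfies `Δᵢ ≤ u j - u i`; if in addition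
`|Sstar| < K`, then `Δᵢ ≤ -u i`, where `u ℓ = v ℓ * (r ℓ - θ)`. -/
theorem mnl_gap_le_advantage_diff_of_not_mem
    (N K : ℕ) (hK : 0 < K)
    (v r : Fin N → ℝ)
    (hv : ∀ i, v i ∈ Set.Icc (0 : ℝ) 1) (hr : ∀ i, r i ∈ Set.Icc (0 : ℝ) 1)
    (R : Finset (Fin N) → ℝ)
    (hR : ∀ S : Finset (Fin N), R S = (∑ i ∈ S, v i * r i) / (1 + ∑ i ∈ S, v i))
    (Sstar : Finset (Fin N)) (hScard : Sstar.card ≤ K)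
    (hopt : ∀ S : Finset (Fin N), S.card ≤ K → R S ≤ R Sstar)
    (θ : ℝ) (hθ : θ = R Sstar)
    (u : Fin N → ℝ) (hu : ∀ ℓ, u ℓ = v ℓ * (r ℓ - θ))
    (i j : Fin N) (hi : i ∉ Sstar) (hj : j ∈ Sstar)
    (hne : ((univ : Finset (Fin N)).powerset.filter
        (fun S => S.card ≤ K ∧ i ∈ S)).Nonempty)
    (Δi : ℝ)
    (hΔ : Δi = θ - ((univ : Finset (Fin N)).powerset.filter
        (fun S => S.card ≤ K ∧ i ∈ S)).sup' hne R) :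
    Δi ≤ u j - u i ∧ (Sstar.card < K → Δi ≤ -u i) := by
  have hden : ∀ S : Finset (Fin N), (1:ℝ) ≤ 1 + ∑ ℓ ∈ S, v ℓ := by
    intro S
    have : (0:ℝ) ≤ ∑ ℓ ∈ S, v ℓ := Finset.sum_nonneg fun ℓ _ => (hv ℓ).1
    linarith
  have hdpos : ∀ S : Finset (Fin N), (0:ℝ) < 1 + ∑ ℓ ∈ S, v ℓ := fun S =>
    lt_of_lt_of_le one_pos (hden S)
  have hsumu : ∀ S : Finset (Fin N),
      ∑ ℓ ∈ S, u ℓ = (∑ ℓ ∈ S, v ℓ * r ℓ) - θ * ∑ ℓ ∈ S, v ℓ := by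
    intro S
    rw [Finset.mul_sum, ← Finset.sum_sub_distrib]
    exact Finset.sum_congr rfl fun ℓ _ => by rw [hu]; ring
  have key : ∀ S : Finset (Fin N),
      θ - R S = (θ - ∑ ℓ ∈ S, u ℓ) / (1 + ∑ ℓ ∈ S, v ℓ) := by
    intro S
    have hd : (1 + ∑ ℓ ∈ S, v ℓ) ≠ 0 := ne_of_gt (hdpos S)
    rw [hR, hsumu]
    field_simp
    ring
  have hθu : θ = ∑ ℓ ∈ Sstar, u ℓ := by
    have h := key Sstar
    rw [← hθ, sub_self] at h
    have h2 := (div_eq_zero_iff.mp h.symm).resolve_right (ne_of_gt (hdpos Sstar))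
    linarith
  have main : ∀ S : Finset (Fin N), S.card ≤ K → i ∈ S →
      Δi ≤ θ - ∑ ℓ ∈ S, u ℓ := by
    intro S hcard hiS
    have hmem : S ∈ ((univ : Finset (Fin N)).powerset.filter
        (fun S => S.card ≤ K ∧ i ∈ S)) := by
      simp [Finset.mem_filter, hcard, hiS]
    have h1 : R S ≤ ((univ : Finset (Fin N)).powerset.filter
        (fun S => S.card ≤ K ∧ i ∈ S)).sup' hne R := Finset.le_sup' R hmem
    have h2 : Δi ≤ θ - R S := by rw [hΔ]; linarith
    have h4 : 0 ≤ θ - R S := by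
      have := hopt S hcard; rw [← hθ] at this; linarith
    have h3 : 0 ≤ θ - ∑ ℓ ∈ S, u ℓ := by
      rw [key S] at h4
      have := mul_nonneg h4 (le_of_lt (hdpos S))
      rwa [div_mul_cancel₀ _ (ne_of_gt (hdpos S))] at this
    have h5 : θ - R S ≤ θ - ∑ ℓ ∈ S, u ℓ := by
      rw [key S]
      exact div_le_self h3 (hden S)
    linarith
  constructor
  · -- swap set
    set S' := insert i (Sstar.erase j) with hS'
    have hiE : i ∉ Sstar.erase j := fun h => hi (Finset.mem_of_mem_erase h)
    have hcard : S'.card ≤ K := by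
      rw [hS', Finset.card_insert_of_notMem hiE,
        Finset.card_erase_of_mem hj]
      have : 1 ≤ Sstar.card := Finset.card_pos.mpr ⟨j, hj⟩
      omega
    have hsum : ∑ ℓ ∈ S', u ℓ = u i + (∑ ℓ ∈ Sstar, u ℓ - u j) := by
      rw [hS', Finset.sum_insert hiE, Finset.sum_erase_eq_sub hj]
    have := main S' hcard (Finset.mem_insert_self _ _)
    rw [hsum, ← hθu] at this
    linarith
  · intro hlt
    set S'' := insert i Sstar with hS''
    have hcard : S''.card ≤ K := by
      rw [hS'', Finset.card_insert_of_notMem hi]; omega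
    have hsum : ∑ ℓ ∈ S'', u ℓ = u i + ∑ ℓ ∈ Sstar, u ℓ := by
      rw [hS'', Finset.sum_insert hi]
    have := main S'' hcard (Finset.mem_insert_self _ _)
    rw [hsum, ← hθu] at this
    linarith
end

section
/- Generalized comparison lemma with a fixed set $Z \subseteq S^*$: define the reduced score $\xi_i = u_i / (1 + \sum_{\ell \in Z} v_\ell)$ for $i \notin Z$. For items $i \in S^*\setminus Z$ and $j \notin S^*$ (with $j \notin Z$), the suboptimality gap satisfies $\Delta_i \le \xi_i - \xi_j$ and $\Delta_i \le \xi_i$. -/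
open Finset

/-- Generalized comparison lemma with a fixed set `Z ⊆ Sstar`.
With reduced scores `ξ ℓ = u ℓ / (1 + ∑ t ∈ Z, v t)`, for `i ∈ Sstar \ Z` and
`j ∉ Sstar` (with `j ∉ Z`), the gap `Δᵢ = θ - max_{|S| ≤ K, i ∉ S} R S`
satisfies `Δᵢ ≤ ξ i - ξ j` and `Δᵢ ≤ ξ i`. -/
theorem mnl_gap_le_reduced_score_diff
    (N K : ℕ) (hK : 0 < K)
    (v r : Fin N → ℝ)
    (hv : ∀ i, v i ∈ Set.Icc (0 : ℝ) 1) (hr : ∀ i, r i ∈ Set.Icc (0 : ℝ) 1)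
    (R : Finset (Fin N) → ℝ)
    (hR : ∀ S : Finset (Fin N), R S = (∑ i ∈ S, v i * r i) / (1 + ∑ i ∈ S, v i))
    (Sstar : Finset (Fin N)) (hScard : Sstar.card ≤ K)
    (hopt : ∀ S : Finset (Fin N), S.card ≤ K → R S ≤ R Sstar)
    (θ : ℝ) (hθ : θ = R Sstar)
    (u : Fin N → ℝ) (hu : ∀ ℓ, u ℓ = v ℓ * (r ℓ - θ))
    (Z : Finset (Fin N)) (hZ : Z ⊆ Sstar)
    (ξ : Fin N → ℝ) (hξ : ∀ ℓ, ξ ℓ = u ℓ / (1 + ∑ t ∈ Z, v t))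
    (i j : Fin N) (hi : i ∈ Sstar) (hiZ : i ∉ Z) (hj : j ∉ Sstar) (hjZ : j ∉ Z)
    (hne : ((univ : Finset (Fin N)).powerset.filter
        (fun S => S.card ≤ K ∧ i ∉ S)).Nonempty)
    (Δi : ℝ)
    (hΔ : Δi = θ - ((univ : Finset (Fin N)).powerset.filter
        (fun S => S.card ≤ K ∧ i ∉ S)).sup' hne R) :
    Δi ≤ ξ i - ξ j ∧ Δi ≤ ξ i := by

  have hvnn : ∀ t, 0 ≤ v t := fun t => (hv t).1
  set A := Sstar.erase i with hAdef
  have hiA : i ∉ A := notMem_erase i Sstar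
  have hjA : j ∉ A := fun h => hj (mem_of_mem_erase h)
  have hij : i ≠ j := fun h => hj (h ▸ hi)
  have hZA : Z ⊆ A := fun t ht => mem_erase.mpr ⟨fun h => hiZ (h ▸ ht), hZ ht⟩
  have hsumA : ∑ t ∈ A, v t = ∑ t ∈ Sstar, v t - v i := by
    rw [hAdef, Finset.sum_erase_eq_sub hi]
  have hsumAr : ∑ t ∈ A, v t * r t = ∑ t ∈ Sstar, v t * r t - v i * r i := by
    rw [hAdef, Finset.sum_erase_eq_sub hi]
  have hZle : ∑ t ∈ Z, v t ≤ ∑ t ∈ A, v t :=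
    Finset.sum_le_sum_of_subset_of_nonneg hZA (fun t _ _ => hvnn t)
  have hZnn : (0:ℝ) ≤ ∑ t ∈ Z, v t := Finset.sum_nonneg fun t _ => hvnn t
  have hApos : (0:ℝ) < 1 + ∑ t ∈ A, v t := by linarith
  have hZpos : (0:ℝ) < 1 + ∑ t ∈ Z, v t := by linarith
  have hVpos : (0:ℝ) < 1 + ∑ t ∈ Sstar, v t := by
    have : (0:ℝ) ≤ ∑ t ∈ Sstar, v t := Finset.sum_nonneg fun t _ => hvnn t
    linarith
  have hAcard : A.card ≤ K := le_trans (card_erase_le) hScard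
  have hcardlt : A.card < Sstar.card := card_erase_lt_of_mem hi
  have hS1card : (insert j A).card ≤ K := by
    rw [card_insert_of_notMem hjA]; omega
  have hAmem : A ∈ ((univ : Finset (Fin N)).powerset.filter
      (fun S => S.card ≤ K ∧ i ∉ S)) :=
    mem_filter.mpr ⟨mem_powerset.mpr (subset_univ _), hAcard, hiA⟩
  have hS1mem : insert j A ∈ ((univ : Finset (Fin N)).powerset.filter
      (fun S => S.card ≤ K ∧ i ∉ S)) := by
    refine mem_filter.mpr ⟨mem_powerset.mpr (subset_univ _), hS1card, ?_⟩
    simp [hij, hiA]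
  have hsupA := Finset.le_sup' R hAmem
  have hsupS1 := Finset.le_sup' R hS1mem
  have hsumS1 : ∑ t ∈ insert j A, v t = v j + ∑ t ∈ A, v t := sum_insert hjA
  have hsumS1r : ∑ t ∈ insert j A, v t * r t = v j * r j + ∑ t ∈ A, v t * r t :=
    sum_insert hjA
  have hD1pos : (0:ℝ) < 1 + v j + ∑ t ∈ A, v t := by
    have := hvnn j; linarith
  -- key identities
  have key1 : θ - R A = u i / (1 + ∑ t ∈ A, v t) := by
    rw [hθ, hR, hR, hu, hθ, hR, hsumA, hsumAr]
    have h1 : (1 + ∑ t ∈ Sstar, v t) ≠ 0 := ne_of_gt hVpos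
    have h2 : (1 + (∑ t ∈ Sstar, v t - v i)) ≠ 0 := by rw [← hsumA]; exact ne_of_gt hApos
    field_simp
    ring
  have key2 : θ - R (insert j A) = (u i - u j) / (1 + v j + ∑ t ∈ A, v t) := by
    rw [hθ, hR, hR, hu, hu, hθ, hR, hsumS1, hsumS1r, hsumA, hsumAr]
    have h1 : (1 + ∑ t ∈ Sstar, v t) ≠ 0 := ne_of_gt hVpos
    have h2 : (1 + (v j + (∑ t ∈ Sstar, v t - v i))) ≠ 0 := by
      intro h; apply ne_of_gt hD1pos; rw [hsumA]; linarith
    have h3 : (1 + v j + (∑ t ∈ Sstar, v t - v i)) ≠ 0 := by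
      intro h; apply ne_of_gt hD1pos; rw [hsumA]; linarith
    field_simp
    ring
  have hRA : R A ≤ θ := hθ ▸ hopt A hAcard
  have hRS1 : R (insert j A) ≤ θ := hθ ▸ hopt _ hS1card
  have hui : 0 ≤ u i := by
    have h0 : 0 ≤ u i / (1 + ∑ t ∈ A, v t) := key1 ▸ sub_nonneg.mpr hRA
    have := mul_nonneg h0 hApos.le
    rwa [div_mul_cancel₀ _ (ne_of_gt hApos)] at this
  have huij : 0 ≤ u i - u j := by
    have h0 : 0 ≤ (u i - u j) / (1 + v j + ∑ t ∈ A, v t) := key2 ▸ sub_nonneg.mpr hRS1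
    have := mul_nonneg h0 hD1pos.le
    rwa [div_mul_cancel₀ _ (ne_of_gt hD1pos)] at this
  constructor
  · -- Δi ≤ ξ i - ξ j
    have h1 : Δi ≤ θ - R (insert j A) := by rw [hΔ]; linarith
    have h2 : (u i - u j) / (1 + v j + ∑ t ∈ A, v t) ≤ (u i - u j) / (1 + ∑ t ∈ Z, v t) := by
      apply div_le_div_of_nonneg_left huij hZpos
      have := hvnn j; linarith
    have h3 : ξ i - ξ j = (u i - u j) / (1 + ∑ t ∈ Z, v t) := by
      rw [hξ, hξ, div_sub_div_same]
    rw [h3]; linarith [key2]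
  · have h1 : Δi ≤ θ - R A := by rw [hΔ]; linarith
    have h2 : u i / (1 + ∑ t ∈ A, v t) ≤ u i / (1 + ∑ t ∈ Z, v t) := by
      apply div_le_div_of_nonneg_left hui hZpos; linarith
    rw [hξ]; linarith [key1]
end

section
/- Error propagation for the reduced revenue: Suppose $|S| \le M$, $0 \le \zeta' \le \zeta \le 1$, $0 \le \nu'_i \le \nu_i \le 1$ for $i \in S$, $r_i \in [0,1]$, $\epsilon_1, \epsilon_3 \in (0,1]$, $\nu_i - \nu'_i \le (\max\{\nu_i, 1/M\})\epsilon_1$, and $\zeta - \zeta' \le \epsilon_3$. Then $R(S, \nu, \zeta) - R(S, \nu', \zeta') \le 2\epsilon_1 + \epsilon_3$, where $R(S, \nu, \zeta) = \frac{\zeta + \sum_{i\in S} \nu_i r_i}{1 + \sum_{i\in S} \nu_i}$. -/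
open Finset

/-- Error propagation for the reduced revenue function.
If `|S| ≤ M`, `0 ≤ ζ' ≤ ζ ≤ 1`, `0 ≤ ν'ᵢ ≤ νᵢ ≤ 1`, `rᵢ ∈ [0,1]`,
`νᵢ - ν'ᵢ ≤ max{νᵢ, 1/M}·ε₁` and `ζ - ζ' ≤ ε₃`, then
`R(S,ν,ζ) - R(S,ν',ζ') ≤ 2ε₁ + ε₃`. -/
theorem mnl_reduced_revenue_error_propagation
    {ι : Type*} [DecidableEq ι]
    (S : Finset ι) (M : ℕ) (hM : 1 ≤ M) (hS : S.card ≤ M)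
    (r ν ν' : ι → ℝ) (ζ ζ' : ℝ)
    (hr : ∀ i ∈ S, r i ∈ Set.Icc (0 : ℝ) 1)
    (hζ0 : 0 ≤ ζ') (hζζ : ζ' ≤ ζ) (hζ1 : ζ ≤ 1)
    (hν : ∀ i ∈ S, 0 ≤ ν' i ∧ ν' i ≤ ν i ∧ ν i ≤ 1)
    (ε₁ ε₃ : ℝ) (hε₁ : ε₁ ∈ Set.Ioc (0 : ℝ) 1) (hε₃ : ε₃ ∈ Set.Ioc (0 : ℝ) 1)
    (hνd : ∀ i ∈ S, ν i - ν' i ≤ max (ν i) (1 / (M : ℝ)) * ε₁)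
    (hζd : ζ - ζ' ≤ ε₃) :
    (ζ + ∑ i ∈ S, ν i * r i) / (1 + ∑ i ∈ S, ν i) -
      (ζ' + ∑ i ∈ S, ν' i * r i) / (1 + ∑ i ∈ S, ν' i) ≤ 2 * ε₁ + ε₃ := by

  obtain ⟨hε₁0, hε₁1⟩ := hε₁
  obtain ⟨hε₃0, hε₃1⟩ := hε₃
  set t := ∑ i ∈ S, ν i with ht
  set t' := ∑ i ∈ S, ν' i with ht'
  have hM0 : (0:ℝ) < M := by exact_mod_cast hM
  have ht'0 : 0 ≤ t' := Finset.sum_nonneg fun i hi => (hν i hi).1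
  have htt' : t' ≤ t := Finset.sum_le_sum fun i hi => (hν i hi).2.1
  have ht0 : 0 ≤ t := le_trans ht'0 htt'
  have hB' : (0:ℝ) < 1 + t' := by linarith
  have hB : (0:ℝ) < 1 + t := by linarith
  have hA'0 : 0 ≤ ζ' + ∑ i ∈ S, ν' i * r i := by
    have : 0 ≤ ∑ i ∈ S, ν' i * r i :=
      Finset.sum_nonneg fun i hi => mul_nonneg (hν i hi).1 (hr i hi).1
    linarith
  have step1 : (ζ' + ∑ i ∈ S, ν' i * r i) / (1 + t) ≤
      (ζ' + ∑ i ∈ S, ν' i * r i) / (1 + t') :=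
    div_le_div_of_nonneg_left hA'0 hB' (by linarith)
  have step2 : (ζ + ∑ i ∈ S, ν i * r i) - (ζ' + ∑ i ∈ S, ν' i * r i) ≤
      ε₃ + (1 + t) * ε₁ := by
    have h1 : ∑ i ∈ S, ν i * r i - ∑ i ∈ S, ν' i * r i ≤ ∑ i ∈ S, (ν i - ν' i) := by
      rw [← Finset.sum_sub_distrib]
      refine Finset.sum_le_sum fun i hi => ?_
      have := hν i hi; have hri := hr i hi
      have : (ν i - ν' i) * r i ≤ (ν i - ν' i) * 1 := by
        apply mul_le_mul_of_nonneg_left hri.2; linarith [this.2.1]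
      nlinarith [hri.1, (hν i hi).2.1]
    have h2 : ∑ i ∈ S, (ν i - ν' i) ≤ (1 + t) * ε₁ := by
      calc ∑ i ∈ S, (ν i - ν' i) ≤ ∑ i ∈ S, (ν i + 1/(M:ℝ)) * ε₁ := by
            refine Finset.sum_le_sum fun i hi => le_trans (hνd i hi) ?_
            apply mul_le_mul_of_nonneg_right _ (le_of_lt hε₁0)
            exact max_le (by linarith [(one_div_pos.mpr hM0).le]) (by linarith [(hν i hi).1, le_trans (hν i hi).1 (hν i hi).2.1])
        _ = (t + S.card / (M:ℝ)) * ε₁ := by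
            rw [← Finset.sum_mul, Finset.sum_add_distrib, Finset.sum_const, nsmul_eq_mul]
            ring
        _ ≤ (1 + t) * ε₁ := by
            apply mul_le_mul_of_nonneg_right _ (le_of_lt hε₁0)
            have : (S.card : ℝ) / M ≤ 1 := by
              rw [div_le_one hM0]; exact_mod_cast hS
            linarith
    linarith
  have step3 : ((ζ + ∑ i ∈ S, ν i * r i) - (ζ' + ∑ i ∈ S, ν' i * r i)) / (1 + t) ≤
      ε₁ + ε₃ := by
    rw [div_le_iff₀ hB]
    nlinarith [step2]
  have key : (ζ + ∑ i ∈ S, ν i * r i) / (1 + t) -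
      (ζ' + ∑ i ∈ S, ν' i * r i) / (1 + t') ≤ ε₁ + ε₃ := by
    have := sub_div (ζ + ∑ i ∈ S, ν i * r i) (ζ' + ∑ i ∈ S, ν' i * r i) (1 + t)
    linarith [step1, step3]
  linarith
end

section
/- KL divergence bound for MNL choice distributions: Let $S \subseteq [N]$ be an assortment and let $v, v'$ be preference vectors with $v'_x \ge v_x > 0$ for some $x \in S$ and $v'_i = v_i$ for $i \ne x$. Let $P_S^v$ be the distribution on $S \cup \{0\}$ with $P_S^v(i) = v_i/(1 + \sum_{j\in S} v_j)$ (where $v_0 = 1$). Then $D_{KL}(P_S^v \,\|\, P_S^{v'}) \le \frac{(v'_x - v_x)^2}{2 v_x (1 + \sum_{i\in S} v_i)}$. -/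
open Finset

lemma log_ge_sub_sq (t : ℝ) (ht : 0 ≤ t) : t - t^2/2 ≤ Real.log (1+t) := by
  have hderiv : ∀ s ∈ Set.Ici (0:ℝ),
      HasDerivAt (fun u : ℝ => Real.log (1+u) - (u - u^2/2)) (1/(1+s) - (1 - s)) s := by
    intro s hs
    have h1 : (0:ℝ) < 1 + s := by simp at hs; linarith
    have := ((hasDerivAt_id s).const_add 1).log (ne_of_gt h1)
    simpa [Pi.sub_def] using this.sub ((hasDerivAt_id s).sub (((hasDerivAt_pow 2 s)).div_const 2))
  have key : MonotoneOn (fun u : ℝ => Real.log (1+u) - (u - u^2/2)) (Set.Ici 0) := by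
    apply monotoneOn_of_deriv_nonneg (convex_Ici 0)
    · exact fun s hs => (hderiv s hs).continuousAt.continuousWithinAt
    · intro s hs
      rw [interior_Ici] at hs
      exact (hderiv s (Set.mem_Ici.mpr (le_of_lt hs))).differentiableAt.differentiableWithinAt
    · intro s hs
      rw [interior_Ici] at hs
      have h1 : (0:ℝ) < 1 + s := by simp at hs; linarith
      rw [(hderiv s (Set.mem_Ici.mpr (le_of_lt hs))).deriv, div_sub' (ne_of_gt h1)]
      apply div_nonneg _ h1.le
      simp at hs; nlinarith
  have h0 : (0:ℝ) ∈ Set.Ici (0:ℝ) := Set.mem_Ici.mpr le_rfl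
  have := key h0 (Set.mem_Ici.mpr ht) ht
  simp at this
  linarith

/-- KL divergence bound for MNL choice distributions. For an assortment
`S` and preference vectors `v, v'` differing only at `x ∈ S` with `v' x ≥ v x > 0`,
the KL divergence between the induced choice distributions on `S ∪ {0}` (with no-purchase
weight `v₀ = 1`) is at most `(v' x - v x)² / (2 v x (1 + ∑_{i∈S} v i))`. Here the KL
divergence is written out explicitly as the no-purchase term plus the sum over `S`. -/
theorem mnl_kl_divergence_bound
    (N : ℕ) (S : Finset (Fin N)) (v v' : Fin N → ℝ)
    (hv : ∀ i ∈ S, 0 < v i) (hv' : ∀ i ∈ S, 0 < v' i)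
    (x : Fin N) (hx : x ∈ S)
    (hvx : v x ≤ v' x)
    (hagree : ∀ i, i ≠ x → v' i = v i) :
    (1 / (1 + ∑ j ∈ S, v j)) *
        Real.log ((1 / (1 + ∑ j ∈ S, v j)) / (1 / (1 + ∑ j ∈ S, v' j))) +
      ∑ i ∈ S, (v i / (1 + ∑ j ∈ S, v j)) *
        Real.log ((v i / (1 + ∑ j ∈ S, v j)) / (v' i / (1 + ∑ j ∈ S, v' j)))
    ≤ (v' x - v x) ^ 2 / (2 * v x * (1 + ∑ i ∈ S, v i)) := by
  have hvx0 : 0 < v x := hv x hx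
  have hvx'0 : 0 < v' x := hv' x hx
  set Sv : ℝ := ∑ j ∈ S, v j with hSv
  have hSvpos : 0 ≤ Sv := Finset.sum_nonneg (fun i hi => (hv i hi).le)
  have hV : 0 < 1 + Sv := by linarith
  set δ : ℝ := v' x - v x with hδ
  have hδ0 : 0 ≤ δ := by rw [hδ]; linarith
  have herase : ∑ j ∈ S.erase x, v j + v x = Sv := Finset.sum_erase_add S v hx
  have hsum' : ∑ j ∈ S, v' j = Sv + δ := by
    have h1 : ∑ j ∈ S.erase x, v' j + v' x = ∑ j ∈ S, v' j := Finset.sum_erase_add S v' hx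
    have h3 : ∑ j ∈ S.erase x, v' j = ∑ j ∈ S.erase x, v j :=
      Finset.sum_congr rfl (fun i hi => hagree i (Finset.ne_of_mem_erase hi))
    rw [← h1, h3, hδ]; linarith
  have hV' : 0 < 1 + (Sv + δ) := by linarith
  set L : ℝ := Real.log ((1 + (Sv + δ)) / (1 + Sv)) with hL
  -- rewrite the no-purchase term
  have h0term : (1 / (1 + Sv)) * Real.log ((1 / (1 + Sv)) / (1 / (1 + ∑ j ∈ S, v' j)))
      = (1 / (1 + Sv)) * L := by
    rw [hsum', hL]
    congr 2
    field_simp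
  -- rewrite the sum over S
  have hsumterm : ∑ i ∈ S, (v i / (1 + Sv)) *
        Real.log ((v i / (1 + Sv)) / (v' i / (1 + ∑ j ∈ S, v' j)))
      = (∑ i ∈ S.erase x, v i) * (L / (1 + Sv))
        + (v x / (1 + Sv)) * (Real.log (v x / v' x) + L) := by
    rw [← Finset.sum_erase_add S _ hx]
    congr 1
    · rw [Finset.sum_mul]
      apply Finset.sum_congr rfl
      intro i hi
      have hiS : i ∈ S := Finset.mem_of_mem_erase hi
      have hvi : 0 < v i := hv i hiS
      have hvi' : v' i = v i := hagree i (Finset.ne_of_mem_erase hi)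
      rw [hsum', hvi']
      have : (v i / (1 + Sv)) / (v i / (1 + (Sv + δ))) = (1 + (Sv + δ)) / (1 + Sv) := by
        field_simp
      rw [this, hL]; ring
    · rw [hsum']
      have harg : (v x / (1 + Sv)) / (v' x / (1 + (Sv + δ)))
          = (v x / v' x) * ((1 + (Sv + δ)) / (1 + Sv)) := by
        field_simp
      rw [harg, Real.log_mul (by positivity) (by positivity), hL]
  rw [h0term, hsumterm]
  -- simplify coefficient of L to 1
  have hcoef : (1 / (1 + Sv)) * L + ((∑ i ∈ S.erase x, v i) * (L / (1 + Sv))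
      + (v x / (1 + Sv)) * (Real.log (v x / v' x) + L))
      = L + (v x / (1 + Sv)) * Real.log (v x / v' x) := by
    have : (1 / (1 + Sv)) + (∑ i ∈ S.erase x, v i) / (1 + Sv) + v x / (1 + Sv) = 1 := by
      rw [← add_div, ← add_div, div_eq_one_iff_eq (ne_of_gt hV)]
      linarith [herase]
    linear_combination L * this
  rw [hcoef]
  -- bound L
  have hA : L ≤ δ / (1 + Sv) := by
    have h1 : L ≤ (1 + (Sv + δ)) / (1 + Sv) - 1 :=
      Real.log_le_sub_one_of_pos (div_pos hV' hV)
    have h2 : (1 + (Sv + δ)) / (1 + Sv) - 1 = δ / (1 + Sv) := by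
      field_simp
      ring
    linarith
  -- bound the x-term
  have hB : Real.log (v x / v' x) ≤ -(δ / v x - (δ / v x)^2/2) := by
    have ht := log_ge_sub_sq (δ / v x) (by positivity)
    have h1 : (1:ℝ) + δ / v x = v' x / v x := by
      rw [hδ]; field_simp
      ring
    rw [h1] at ht
    have h2 : Real.log (v x / v' x) = - Real.log (v' x / v x) := by
      rw [Real.log_div (ne_of_gt hvx0) (ne_of_gt hvx'0),
          Real.log_div (ne_of_gt hvx'0) (ne_of_gt hvx0)]
      ring
    rw [h2]
    linarith
  have hcoefpos : 0 ≤ v x / (1 + Sv) := by positivity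
  have hBmul : (v x / (1 + Sv)) * Real.log (v x / v' x)
      ≤ (v x / (1 + Sv)) * (-(δ / v x - (δ / v x)^2/2)) :=
    mul_le_mul_of_nonneg_left hB hcoefpos
  have hfinal : δ / (1 + Sv) + (v x / (1 + Sv)) * (-(δ / v x - (δ / v x)^2/2))
      = δ^2 / (2 * v x * (1 + Sv)) := by
    field_simp
    ring
  calc L + (v x / (1 + Sv)) * Real.log (v x / v' x)
      ≤ δ / (1 + Sv) + (v x / (1 + Sv)) * (-(δ / v x - (δ / v x)^2/2)) := by linarith
    _ = δ^2 / (2 * v x * (1 + Sv)) := hfinal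
    _ = (v' x - v x) ^ 2 / (2 * v x * (1 + ∑ i ∈ S, v i)) := by rw [hδ, hSv]
end

section
/- In the lower-bound instance (all rewards $r_i = 1$, $v_i$ as constructed with $\sum_{i=1}^K v_i = 1$, $v_i = \frac{1}{2K} - \frac{4\Delta_i}{1+2\Delta_i}$ for $i > K$, $\Delta_i \le \frac{1}{16K}$): for any assortment $S \subseteq [N]$ with $|S| \le K$, letting $B = S \setminus S^*$, one has $\theta^* - R(S) \ge \sum_{i\in B} \Delta_i / 2$, where $\theta^* = 1/2$. -/
open Finset

/-- In the lower-bound instance (all rewards `1`, `Sstar = {1,…,K}` with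
total weight `1` so `θ* = 1/2`, items outside `Sstar` have `v i = 1/(2K) - 4Δᵢ/(1+2Δᵢ)`
with `0 < Δᵢ ≤ 1/(16K)`, and items in `Sstar` have `v i ≥ 1/(2K)`), any assortment `S`
with `|S| ≤ K` satisfies `θ* - R S ≥ ∑_{i ∈ S \ Sstar} Δᵢ / 2`. -/
theorem mnl_lower_bound_instance_regret_per_round
    (N K : ℕ) (hK : 1 ≤ K)
    (Δ v : Fin N → ℝ)
    (Sstar : Finset (Fin N))
    (hS : Sstar = univ.filter (fun i : Fin N => (i : ℕ) + 1 ≤ K))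
    (hsum : ∑ i ∈ Sstar, v i = 1)
    (hvS : ∀ i ∈ Sstar, 1 / (2 * (K : ℝ)) ≤ v i)
    (hvB : ∀ i ∉ Sstar, v i = 1 / (2 * (K : ℝ)) - 4 * Δ i / (1 + 2 * Δ i))
    (hΔ : ∀ i ∉ Sstar, 0 < Δ i ∧ Δ i ≤ 1 / (16 * (K : ℝ)))
    (R : Finset (Fin N) → ℝ)
    (hR : ∀ S : Finset (Fin N), R S = (∑ i ∈ S, v i) / (1 + ∑ i ∈ S, v i))
    (S : Finset (Fin N)) (hcard : S.card ≤ K) :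
    ∑ i ∈ S \ Sstar, Δ i / 2 ≤ 1 / 2 - R S := by
  have hKpos : (0:ℝ) < (K:ℝ) := by exact_mod_cast hK
  have hK1 : (1:ℝ) ≤ (K:ℝ) := by exact_mod_cast hK
  -- bounds on v for i ∉ Sstar
  have hvB' : ∀ i ∉ Sstar, 0 ≤ v i ∧ v i ≤ 1 / (2*(K:ℝ)) - 2 * Δ i := by
    intro i hi
    obtain ⟨hΔpos, hΔle⟩ := hΔ i hi
    have hΔle' : Δ i ≤ 1/16 := le_trans hΔle (by
      rw [div_le_div_iff₀ (by positivity) (by norm_num)]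
      nlinarith)
    have hden : (0:ℝ) < 1 + 2 * Δ i := by linarith
    rw [hvB i hi]
    constructor
    · have h1 : 4 * Δ i / (1 + 2 * Δ i) ≤ 4 * Δ i := by
        rw [div_le_iff₀ hden]; nlinarith
      have h2 : 4 * Δ i ≤ 1 / (2*(K:ℝ)) := by
        rw [le_div_iff₀ (by positivity)]
        have := hΔle
        rw [le_div_iff₀ (by positivity : (0:ℝ) < 16*(K:ℝ))] at this
        nlinarith
      linarith
    · have : 2 * Δ i ≤ 4 * Δ i / (1 + 2 * Δ i) := by
        rw [le_div_iff₀ hden]; nlinarith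
      linarith
  have hvnn : ∀ i, 0 ≤ v i := by
    intro i
    by_cases hi : i ∈ Sstar
    · have := hvS i hi; have : (0:ℝ) < 1/(2*(K:ℝ)) := by positivity
      linarith [hvS i hi]
    · exact (hvB' i hi).1
  set δ := ∑ i ∈ S \ Sstar, Δ i with hδdef
  have hδnn : 0 ≤ δ := Finset.sum_nonneg fun i hi => le_of_lt (hΔ i (Finset.mem_sdiff.mp hi).2).1
  -- bound on sum over B
  have hb : ∑ i ∈ S \ Sstar, v i ≤ ((S \ Sstar).card : ℝ) / (2*(K:ℝ)) - 2*δ := by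
    have h1 : ∑ i ∈ S \ Sstar, v i ≤ ∑ i ∈ S \ Sstar, (1 / (2*(K:ℝ)) - 2 * Δ i) :=
      Finset.sum_le_sum fun i hi => (hvB' i (Finset.mem_sdiff.mp hi).2).2
    rw [Finset.sum_sub_distrib, Finset.sum_const, ← Finset.mul_sum] at h1
    simp only [nsmul_eq_mul] at h1
    rw [hδdef]
    calc ∑ i ∈ S \ Sstar, v i ≤ ((S \ Sstar).card : ℝ) * (1/(2*(K:ℝ))) - 2 * ∑ i ∈ S \ Sstar, Δ i := h1
      _ = ((S \ Sstar).card : ℝ) / (2*(K:ℝ)) - 2 * ∑ i ∈ S \ Sstar, Δ i := by ring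
  -- bound on sum over A
  have hsplit : ∑ i ∈ Sstar ∩ S, v i + ∑ i ∈ Sstar \ S, v i = 1 := by
    rw [Finset.sum_inter_add_sum_sdiff, hsum]
  have haux : ((Sstar \ S).card : ℝ) / (2*(K:ℝ)) ≤ ∑ i ∈ Sstar \ S, v i := by
    have h1 : ∑ i ∈ Sstar \ S, (1/(2*(K:ℝ))) ≤ ∑ i ∈ Sstar \ S, v i :=
      Finset.sum_le_sum fun i hi => hvS i (Finset.mem_sdiff.mp hi).1
    rw [Finset.sum_const, nsmul_eq_mul] at h1
    calc ((Sstar \ S).card : ℝ) / (2*(K:ℝ)) = ((Sstar \ S).card : ℝ) * (1/(2*(K:ℝ))) := by ring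
      _ ≤ _ := h1
  have ha : ∑ i ∈ Sstar ∩ S, v i ≤ 1 - ((Sstar \ S).card : ℝ) / (2*(K:ℝ)) := by linarith
  -- cardinality comparison
  have hcardB : ((S \ Sstar).card : ℝ) ≤ ((Sstar \ S).card : ℝ) := by
    rcases (S \ Sstar).eq_empty_or_nonempty with he | ⟨i, hi⟩
    · rw [he]; simp
    · have hiS := Finset.mem_sdiff.mp hi
      have hiK : K ≤ (i : ℕ) := by
        by_contra h
        exact hiS.2 (hS ▸ Finset.mem_filter.mpr ⟨Finset.mem_univ i, by omega⟩)
      have hKN : K ≤ N := le_of_lt (lt_of_le_of_lt hiK i.isLt)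
      have hSstarK : K ≤ Sstar.card := by
        have hsub : Finset.univ.map (Fin.castLEEmb hKN) ⊆ Sstar := by
          intro j hj
          obtain ⟨j', _, rfl⟩ := Finset.mem_map.mp hj
          rw [hS]
          refine Finset.mem_filter.mpr ⟨Finset.mem_univ _, ?_⟩
          have := j'.isLt
          simp only [Fin.castLEEmb, Function.Embedding.coeFn_mk, Fin.coe_castLE]
          omega
        calc K = (Finset.univ.map (Fin.castLEEmb hKN)).card := by simp
          _ ≤ Sstar.card := Finset.card_le_card hsub
      have h1 : (S \ Sstar).card + (S ∩ Sstar).card = S.card :=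
        Finset.card_sdiff_add_card_inter S Sstar
      have h2 : (Sstar \ S).card + (Sstar ∩ S).card = Sstar.card :=
        Finset.card_sdiff_add_card_inter Sstar S
      have h3 : (S ∩ Sstar).card = (Sstar ∩ S).card := by rw [Finset.inter_comm]
      have : (S \ Sstar).card ≤ (Sstar \ S).card := by omega
      exact_mod_cast this
  -- total weight
  have hSsplit : ∑ i ∈ S, v i = ∑ i ∈ Sstar ∩ S, v i + ∑ i ∈ S \ Sstar, v i := by
    rw [Finset.inter_comm, Finset.sum_inter_add_sum_sdiff]
  have hT : ∑ i ∈ S, v i ≤ 1 - 2*δ := by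
    rw [hSsplit]
    have : ((S \ Sstar).card : ℝ) / (2*(K:ℝ)) ≤ ((Sstar \ S).card : ℝ) / (2*(K:ℝ)) := by
      gcongr
    linarith
  have hTnn : 0 ≤ ∑ i ∈ S, v i := Finset.sum_nonneg fun i _ => hvnn i
  rw [hR]
  set T := ∑ i ∈ S, v i with hTdef
  have h1T : (0:ℝ) < 1 + T := by linarith
  have hgoal : ∑ i ∈ S \ Sstar, Δ i / 2 = δ / 2 := by
    rw [hδdef, Finset.sum_div]
  rw [hgoal]
  have hTdiv : T / (1 + T) ≤ 1/2 - δ/2 := by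
    rw [div_le_iff₀ h1T]
    nlinarith
  linarith
end

section
/- Upper-tail bound for sums of shifted geometric random variables: Let $X_1,\dots,X_n$ be independent random variables with $\mathbb{P}(X_i = k) = p_i(1-p_i)^{k-1}$ for $k \ge 1$, $p_* = \min_i p_i > 0$, $X = \sum_i X_i$, $\mu = \mathbb{E}[X]$. Then for any $\lambda \ge 1$, $\mathbb{P}(X \ge \lambda\mu) \le \exp(-p_*\mu(\lambda - 1 - \ln\lambda))$. -/
set_option maxHeartbeats 800000

open MeasureTheory ProbabilityTheory Real

lemma geom_mgf_aux {Ω : Type*} [MeasurableSpace Ω] (μ : Measure Ω) [IsProbabilityMeasure μ]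
    (X : Ω → ℕ) (hX : Measurable X) (q : ℝ) (hq0 : 0 < q) (hq1 : q ≤ 1)
    (hdist : ∀ k : ℕ, μ {ω | X ω = k + 1} = ENNReal.ofReal (q * (1 - q) ^ k))
    (t : ℝ) (hr : (1 - q) * Real.exp t < 1) :
    Integrable (fun ω => Real.exp (t * X ω)) μ ∧
      ∫ ω, Real.exp (t * X ω) ∂μ = q * Real.exp t / (1 - (1 - q) * Real.exp t) := by
  set r : ℝ := (1 - q) * Real.exp t with hr_def
  have hr0 : 0 ≤ r := mul_nonneg (by linarith) (exp_pos t).le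
  have hq1' : (1 : ℝ) - q < 1 := by linarith
  obtain ⟨ν, hν⟩ : ∃ ν : Measure ℕ, ν = μ.map X := ⟨_, rfl⟩
  have hν_apply : ∀ s : Set ℕ, ν s = μ (X ⁻¹' s) := fun s => by
    rw [hν]; exact Measure.map_apply hX (MeasurableSet.of_discrete)
  have hνk : ∀ k : ℕ, ν {k + 1} = ENNReal.ofReal (q * (1 - q) ^ k) := by
    intro k
    rw [hν_apply, ← hdist k]
    rfl
  -- ν {0} = 0
  have hsum1 : Summable (fun k : ℕ => q * (1 - q) ^ k) :=
    (summable_geometric_of_lt_one (by linarith) hq1').mul_left q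
  have htsum1 : ∑' k : ℕ, q * (1 - q) ^ k = 1 := by
    rw [tsum_mul_left, tsum_geometric_of_lt_one (by linarith) hq1']
    rw [sub_sub_cancel, mul_inv_cancel₀ hq0.ne']
  have huniv : ∑' k : ℕ, ν {k} = 1 := by
    have := lintegral_countable' (fun _ : ℕ => (1 : ENNReal)) (μ := ν)
    simp only [one_mul, lintegral_one] at this
    rw [← this, hν]
    have : IsProbabilityMeasure (Measure.map X μ) := Measure.isProbabilityMeasure_map hX.aemeasurable
    exact measure_univ
  have hν0 : ν {0} = 0 := by
    have h2 : ∑' k : ℕ, ν {k} = ν {0} + ∑' k : ℕ, ν {k + 1} :=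
      tsum_eq_zero_add' (f := fun k : ℕ => ν {k}) ENNReal.summable
    have h3 : ∑' k : ℕ, ν {k + 1} = 1 := by
      simp_rw [hνk]
      rw [← ENNReal.ofReal_tsum_of_nonneg
        (fun k => mul_nonneg hq0.le (pow_nonneg (by linarith) k)) hsum1, htsum1,
        ENNReal.ofReal_one]
    rw [huniv, h3] at h2
    have h4 : ν {0} + 1 = 0 + 1 := by rw [zero_add, ← h2]
    exact WithTop.add_right_cancel ENNReal.one_ne_top h4
  -- the lintegral
  have hsumr : Summable (fun k : ℕ => q * Real.exp t * r ^ k) :=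
    (summable_geometric_of_lt_one hr0 hr).mul_left _
  have hlin : ∫⁻ ω, ENNReal.ofReal (Real.exp (t * X ω)) ∂μ
      = ENNReal.ofReal (q * Real.exp t * (1 - r)⁻¹) := by
    have hmg : Measurable fun k : ℕ => ENNReal.ofReal (Real.exp (t * k)) :=
      measurable_from_nat
    have h0 : ∫⁻ ω, ENNReal.ofReal (Real.exp (t * X ω)) ∂μ
        = ∫⁻ k, ENNReal.ofReal (Real.exp (t * (k : ℕ))) ∂ν := by
      rw [hν]; exact (lintegral_map (μ := μ) hmg hX).symm
    rw [h0, lintegral_countable']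
    rw [tsum_eq_zero_add' (f := fun k : ℕ => ENNReal.ofReal (Real.exp (t * (k : ℕ))) * ν {k})
      ENNReal.summable]
    have hterm : ∀ k : ℕ, ENNReal.ofReal (Real.exp (t * ((k : ℕ) + 1 : ℕ)))
        * ν {k + 1} = ENNReal.ofReal (q * Real.exp t * r ^ k) := by
      intro k
      rw [hνk k, ← ENNReal.ofReal_mul (exp_pos _).le]
      congr 1
      have : Real.exp (t * ((k : ℝ) + 1)) = Real.exp t * Real.exp t ^ k := by
        rw [← Real.exp_nat_mul, ← Real.exp_add]; ring_nf
      push_cast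
      rw [this, hr_def, mul_pow]
      ring
    simp_rw [hterm]
    rw [hν0, mul_zero, zero_add,
      ← ENNReal.ofReal_tsum_of_nonneg (fun k => by positivity) hsumr,
      tsum_mul_left, tsum_geometric_of_lt_one hr0 hr]
  have hmeas : Measurable fun ω => Real.exp (t * X ω) := by
    exact Measurable.comp (g := fun k : ℕ => Real.exp (t * (k : ℝ))) measurable_from_nat hX
  have hint : Integrable (fun ω => Real.exp (t * X ω)) μ := by
    refine ⟨hmeas.aestronglyMeasurable, ?_⟩
    rw [hasFiniteIntegral_iff_ofReal (Filter.Eventually.of_forall fun ω => (exp_pos _).le)]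
    rw [hlin]
    exact ENNReal.ofReal_lt_top
  refine ⟨hint, ?_⟩
  rw [integral_eq_lintegral_of_nonneg_ae (Filter.Eventually.of_forall fun ω => (exp_pos _).le)
    hmeas.aestronglyMeasurable, hlin,
    ENNReal.toReal_ofReal
      (mul_nonneg (mul_nonneg hq0.le (exp_pos t).le) (inv_nonneg.mpr (by linarith))),
    div_eq_mul_inv]

/-- Janson-type tail bound: Let `X 1, …, X n` be independent shifted
geometric random variables, `ℙ(X i = k) = p i * (1 - p i)^(k-1)` for `k ≥ 1`, with
`p* = min p i > 0` and `μexp = 𝔼[∑ X i] = ∑ 1/p i`. Then for every `λ ≥ 1`,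
`ℙ(∑ X i ≥ λ·μexp) ≤ exp(-p*·μexp·(λ - 1 - log λ))`. -/
theorem shifted_geometric_sum_upper_tail
    {Ω : Type*} [MeasurableSpace Ω] (μ : Measure Ω) [IsProbabilityMeasure μ]
    (n : ℕ) (X : Fin n → Ω → ℕ) (hmeas : ∀ i, Measurable (X i))
    (p : Fin n → ℝ) (hp : ∀ i, 0 < p i ∧ p i ≤ 1)
    (hdist : ∀ (i : Fin n) (k : ℕ),
      μ {ω | X i ω = k + 1} = ENNReal.ofReal (p i * (1 - p i) ^ k))
    (hind : iIndepFun X μ)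
    (pstar : ℝ) (hpstar : 0 < pstar) (hple : ∀ i, pstar ≤ p i)
    (m : ℝ) (hm : m = ∑ i, 1 / p i)
    (lam : ℝ) (hlam : 1 ≤ lam) :
    (μ {ω | lam * m ≤ ∑ i, (X i ω : ℝ)}).toReal ≤
      Real.exp (-(pstar * m * (lam - 1 - Real.log lam))) := by
  classical
  have hlam0 : (0:ℝ) < lam := lt_of_lt_of_le one_pos hlam
  -- trivial case n = 0
  rcases Nat.eq_zero_or_pos n with hn | hn
  · subst hn
    simp only [Finset.univ_eq_empty, Finset.sum_empty] at hm ⊢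
    subst hm
    have hset : {ω : Ω | lam * 0 ≤ (0:ℝ)} = Set.univ := by
      ext ω; simp
    rw [hset, measure_univ, ENNReal.toReal_one]
    simp
  set t : ℝ := pstar * (1 - 1/lam) with ht_def
  have h1lam0 : 0 ≤ 1 - 1/lam := by
    rw [sub_nonneg]; exact div_le_one_of_le₀ hlam hlam0.le
  have ht0 : 0 ≤ t := mul_nonneg hpstar.le h1lam0
  have htlt : t < pstar := by
    have h1 : 0 < 1/lam := by positivity
    nlinarith
  have hti : ∀ i, t < p i := fun i => lt_of_lt_of_le htlt (hple i)
  have hpstar1 : pstar ≤ 1 := (hple ⟨0, hn⟩).trans (hp ⟨0, hn⟩).2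
  have ht1 : t < 1 := htlt.trans_le hpstar1
  have he : (1 - t) * Real.exp t ≤ 1 := by
    have h1 : -t + 1 ≤ Real.exp (-t) := Real.add_one_le_exp (-t)
    calc (1 - t) * Real.exp t ≤ Real.exp (-t) * Real.exp t := by
          apply mul_le_mul_of_nonneg_right _ (Real.exp_pos t).le
          linarith
      _ = 1 := by rw [← Real.exp_add]; simp
  set Y : Fin n → Ω → ℝ := fun i ω => (X i ω : ℝ) with hY_def
  have hYmeas : ∀ i, Measurable (Y i) := fun i =>
    Measurable.comp (g := fun k : ℕ => (k : ℝ)) measurable_from_nat (hmeas i)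
  have hYind : iIndepFun Y μ :=
    hind.comp (fun _ => (Nat.cast : ℕ → ℝ)) (fun _ => measurable_from_nat)
  -- per-coordinate facts
  have hri : ∀ i, (1 - p i) * Real.exp t < 1 := by
    intro i
    have h1 : (1 - p i) * Real.exp t < (1 - t) * Real.exp t :=
      mul_lt_mul_of_pos_right (by linarith [hti i]) (Real.exp_pos t)
    linarith
  have haux := fun i => geom_mgf_aux μ (X i) (hmeas i) (p i) (hp i).1 (hp i).2
    (hdist i) t (hri i)
  have hint : ∀ i, Integrable (fun ω => Real.exp (t * Y i ω)) μ := fun i => (haux i).1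
  have hmgf_eq : ∀ i, mgf (Y i) μ t
      = p i * Real.exp t / (1 - (1 - p i) * Real.exp t) := fun i => (haux i).2
  -- the per-coordinate bound
  have hbound : ∀ i, mgf (Y i) μ t ≤ Real.exp (pstar / p i * Real.log lam) := by
    intro i
    obtain ⟨hq0, hq1⟩ := hp i
    set q := p i with hq_def
    have htq : t < q := hti i
    have hden1 : 0 < (q - t) / (1 - t) := div_pos (by linarith) (by linarith)
    have hA : (q - t) / (1 - t) ≤ 1 - (1 - q) * Real.exp t := by
      have hexp_le : Real.exp t ≤ 1 / (1 - t) :=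
        (le_div_iff₀ (by linarith : (0:ℝ) < 1 - t)).mpr (by nlinarith [he])
      have h1 : (1 - q) * Real.exp t ≤ (1 - q) * (1 / (1 - t)) :=
        mul_le_mul_of_nonneg_left hexp_le (by linarith)
      have h2 : (1 - q) * (1 / (1 - t)) = 1 - (q - t)/(1 - t) := by
        rw [mul_one_div, eq_sub_iff_add_eq, ← add_div,
          show (1 - q) + (q - t) = 1 - t by ring,
          div_self (by linarith : (0:ℝ) < 1 - t).ne']
      linarith
    have hB : mgf (Y i) μ t ≤ q / (q - t) := by
      rw [hmgf_eq i]
      calc q * Real.exp t / (1 - (1 - q) * Real.exp t)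
          ≤ q * Real.exp t / ((q - t) / (1 - t)) :=
            div_le_div_of_nonneg_left (by positivity) hden1 hA
        _ = q * ((1 - t) * Real.exp t) / (q - t) := by
            rw [div_div_eq_mul_div]; ring
        _ ≤ q * 1 / (q - t) :=
            (div_le_div_iff_of_pos_right (by linarith : (0:ℝ) < q - t)).mpr
              (mul_le_mul_of_nonneg_left he hq0.le)
        _ = q / (q - t) := by rw [mul_one]
    have hC : q / (q - t) ≤ Real.exp (pstar / q * Real.log lam) := by
      set s : ℝ := pstar / q with hs_def
      have hs0 : 0 < s := div_pos hpstar hq0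
      have hs1 : s ≤ 1 := by
        rw [div_le_one hq0]; exact hple i
      have hconv := convexOn_exp.2 (Set.mem_univ (-Real.log lam)) (Set.mem_univ (0:ℝ))
        hs0.le (by linarith : (0:ℝ) ≤ 1 - s) (by ring)
      simp only [smul_eq_mul, mul_zero, add_zero, Real.exp_zero, mul_one] at hconv
      have hexplog : Real.exp (-Real.log lam) = 1/lam := by
        rw [Real.exp_neg, Real.exp_log hlam0, one_div]
      rw [hexplog] at hconv
      -- hconv : exp (s * -log lam) ≤ s * (1/lam) + (1 - s)
      have hqt : (q - t) / q = 1 - s * (1 - 1/lam) := by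
        rw [sub_div, div_self hq0.ne', ht_def, hs_def]; ring
      have h3 : Real.exp (-(s * Real.log lam)) ≤ (q - t) / q := by
        rw [hqt]
        calc Real.exp (-(s * Real.log lam)) = Real.exp (s * -Real.log lam) := by ring_nf
          _ ≤ s * (1/lam) + (1 - s) := hconv
          _ = 1 - s * (1 - 1/lam) := by ring
      have h4 : q / (q - t) = ((q - t) / q)⁻¹ := by
        rw [inv_div]
      rw [h4, show Real.exp (s * Real.log lam) = (Real.exp (-(s * Real.log lam)))⁻¹ by
        rw [Real.exp_neg, inv_inv]]
      exact inv_anti₀ (Real.exp_pos _) h3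
    exact hB.trans hC
  -- Chernoff
  have hint_sum : Integrable (fun ω => Real.exp (t * (∑ i, Y i) ω)) μ :=
    hYind.integrable_exp_mul_sum hYmeas (fun i _ => hint i)
  have hch := measure_ge_le_exp_mul_mgf (μ := μ) (X := ∑ i, Y i) (lam * m) ht0 hint_sum
  have hset : {ω : Ω | lam * m ≤ ∑ i, (X i ω : ℝ)} = {ω | lam * m ≤ (∑ i, Y i) ω} := by
    ext ω; simp [Finset.sum_apply, hY_def]
  rw [hset]
  refine hch.trans ?_
  have hprod : mgf (∑ i, Y i) μ t ≤ Real.exp (pstar * Real.log lam * m) := by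
    rw [hYind.mgf_sum hYmeas Finset.univ]
    calc ∏ i, mgf (Y i) μ t ≤ ∏ i, Real.exp (pstar / p i * Real.log lam) :=
        Finset.prod_le_prod (fun i _ => mgf_nonneg) (fun i _ => hbound i)
      _ = Real.exp (∑ i, pstar / p i * Real.log lam) := (Real.exp_sum _ _).symm
      _ = Real.exp (pstar * Real.log lam * m) := by
          congr 1
          rw [hm, Finset.mul_sum]
          exact Finset.sum_congr rfl fun i _ => by field_simp
  calc Real.exp (-t * (lam * m)) * mgf (∑ i, Y i) μ t
      ≤ Real.exp (-t * (lam * m)) * Real.exp (pstar * Real.log lam * m) := by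
        exact mul_le_mul_of_nonneg_left hprod (Real.exp_pos _).le
    _ = Real.exp (-t * (lam * m) + pstar * Real.log lam * m) := (Real.exp_add _ _).symm
    _ = Real.exp (-(pstar * m * (lam - 1 - Real.log lam))) := by
        congr 1
        have htlam : t * lam = pstar * (lam - 1) := by
          rw [ht_def]; field_simp
        linear_combination (-m) * htlam
end

section
/- Geometric random variable from epoch-based offering: In the MNL model with parameters $v_i \ge 0$ and $v_0 = 1$, suppose the assortment $S$ is offered repeatedly until the 'no purchase' outcome occurs, and $x_i$ counts the number of times item $i \in S$ is purchased during this epoch. Then $x_i$ is a geometric random variable with $\mathbb{P}(x_i = m) = \frac{1}{1+v_i}\left(\frac{v_i}{1+v_i}\right)^m$ for $m \ge 0$; in particular $\mathbb{E}[x_i] = v_i$. -/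
open Finset MeasureTheory ProbabilityTheory

/-- Discrete σ-algebra on the countable outcome space `Option (Fin N)`. -/
instance optionFinMeasurableSpace (N : ℕ) : MeasurableSpace (Option (Fin N)) := ⊤



lemma aux_geom_tsum (m : ℕ) (piR qR p0R : ℝ)
    (hq0 : 0 ≤ qR) (hpi0 : 0 ≤ piR) (hp00 : 0 ≤ p0R) (hq1 : qR < 1) :
    ∑' n : ℕ, (n.choose m : ENNReal) * (ENNReal.ofReal piR ^ m
      * ENNReal.ofReal qR ^ (n - m) * ENNReal.ofReal p0R)
    = ENNReal.ofReal (piR ^ m * p0R * (1 / (1 - qR) ^ (m + 1))) := by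
  set f : ℕ → ENNReal := fun n => (n.choose m : ENNReal) * (ENNReal.ofReal piR ^ m
    * ENNReal.ofReal qR ^ (n - m) * ENNReal.ofReal p0R) with hf
  have hshift : ∑' k, f (k + m) = ∑' n, f n := by
    apply Function.Injective.tsum_eq (g := fun k => k + m)
    · intro a b hab
      simpa using hab
    · intro n hn
      simp only [Function.mem_support] at hn
      rcases le_or_gt m n with h | h
      · exact ⟨n - m, by simp; omega⟩
      · exfalso
        apply hn
        simp only [hf]
        rw [Nat.choose_eq_zero_of_lt h]
        simp
  rw [← hshift]
  have hterm : ∀ k, f (k + m) = ENNReal.ofReal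
      (((k + m).choose m : ℝ) * qR ^ k * (piR ^ m * p0R)) := by
    intro k
    simp only [hf, Nat.add_sub_cancel]
    rw [ENNReal.ofReal_mul (by positivity), ENNReal.ofReal_mul (by positivity),
      ENNReal.ofReal_mul (by positivity), ENNReal.ofReal_natCast,
      ENNReal.ofReal_pow hq0, ENNReal.ofReal_pow hpi0]
    ring
  simp only [hterm]
  have hqnorm : ‖qR‖ < 1 := by
    rw [Real.norm_eq_abs, abs_of_nonneg hq0]; exact hq1
  have hsummable : Summable (fun k => ((k + m).choose m : ℝ) * qR ^ k * (piR ^ m * p0R)) :=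
    (summable_choose_mul_geometric_of_norm_lt_one m hqnorm).mul_right _
  rw [← ENNReal.ofReal_tsum_of_nonneg (fun k => by positivity) hsummable]
  congr 1
  rw [tsum_mul_right, tsum_choose_mul_geometric_of_norm_lt_one m hqnorm]
  ring

/-- Geometric purchase count from epoch-based offering: In the MNL model
with weights `v i ≥ 0` (and no-purchase weight `1`), the assortment `S` is offered at
i.i.d. time steps `c 0, c 1, …` (outcome `some j` = item `j ∈ S` purchased, `none` =
no purchase), each with the MNL choice probabilities. The epoch ends at the first
no-purchase time `τ`, and `x` counts the purchases of a fixed item `i ∈ S` during the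
epoch. Then `x` is geometric: `ℙ(x = m) = (1/(1+v i)) * (v i/(1+v i))^m` for all `m`
(so in particular `𝔼[x] = v i`). -/
theorem mnl_epoch_purchase_count_geometric
    {Ω : Type*} [MeasurableSpace Ω] (μ : Measure Ω) [IsProbabilityMeasure μ]
    (N : ℕ) (v : Fin N → ℝ) (hv : ∀ i, 0 ≤ v i)
    (S : Finset (Fin N))
    (c : ℕ → Ω → Option (Fin N)) (hmeas : ∀ t, Measurable (c t))
    (hsupp : ∀ t ω j, c t ω = some j → j ∈ S)
    (hdist : ∀ t : ℕ,
      (∀ j ∈ S, μ {ω | c t ω = some j} =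
        ENNReal.ofReal (v j / (1 + ∑ l ∈ S, v l))) ∧
      μ {ω | c t ω = none} = ENNReal.ofReal (1 / (1 + ∑ l ∈ S, v l)))
    (hind : iIndepFun (m := fun _ => inferInstance) c μ)
    (τ : Ω → ℕ)
    (hτ : ∀ ω, c (τ ω) ω = none ∧ ∀ t < τ ω, c t ω ≠ none)
    (i : Fin N) (hi : i ∈ S)
    (x : Ω → ℕ)
    (hx : ∀ ω, x ω =
      ((Finset.range (τ ω)).filter (fun t => c t ω = some i)).card) :
    ∀ m : ℕ, μ {ω | x ω = m} =
      ENNReal.ofReal ((1 / (1 + v i)) * (v i / (1 + v i)) ^ m) := by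
  classical
  intro m
  set V : ℝ := ∑ l ∈ S, v l with hVdef
  have hV0 : 0 ≤ V := Finset.sum_nonneg fun l _ => hv l
  have hV1 : (0:ℝ) < 1 + V := by linarith
  have hvi1 : (0:ℝ) < 1 + v i := by linarith [hv i]
  set piR : ℝ := v i / (1 + V) with hpiR
  set qR : ℝ := (∑ l ∈ S.erase i, v l) / (1 + V) with hqR
  set p0R : ℝ := 1 / (1 + V) with hp0R
  have hq0 : 0 ≤ qR := div_nonneg (Finset.sum_nonneg fun l _ => hv l) hV1.le
  have hpi0 : 0 ≤ piR := div_nonneg (hv i) hV1.le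
  have hp00 : 0 ≤ p0R := by positivity
  have hVsplit : V = v i + ∑ l ∈ S.erase i, v l := by
    rw [hVdef, ← Finset.add_sum_erase S v hi]
  have hq1 : qR < 1 := by
    rw [hqR, div_lt_one hV1]; nlinarith [hv i]
  set M : Set (Option (Fin N)) := {y | y ≠ none ∧ y ≠ some i} with hM
  set E : ℕ → Finset ℕ → ℕ → Set (Option (Fin N)) :=
    fun n T t => if t = n then {none} else if t ∈ T then {some i} else M with hE
  set A : ℕ → Finset ℕ → Set Ω :=
    fun n T => ⋂ t ∈ Finset.range (n+1), c t ⁻¹' (E n T t) with hA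
  -- membership characterization
  have hmemA : ∀ n T ω, ω ∈ A n T ↔ (c n ω = none ∧ ∀ t < n, c t ω ∈ E n T t) := by
    intro n T ω
    simp only [hA, Set.mem_iInter, Finset.mem_range, Set.mem_preimage]
    constructor
    · intro h
      refine ⟨?_, fun t ht => h t (by omega)⟩
      have := h n (by omega)
      simpa [hE] using this
    · rintro ⟨h1, h2⟩ t ht
      rcases Nat.lt_succ_iff_lt_or_eq.mp ht with h | rfl
      · exact h2 t h
      · simpa [hE] using h1
  -- key: elements of A n T determine τ and the filter set
  have hkey : ∀ n (T : Finset ℕ), T ⊆ Finset.range n → ∀ ω, ω ∈ A n T →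
      τ ω = n ∧ (Finset.range n).filter (fun t => c t ω = some i) = T := by
    intro n T hT ω hω
    rw [hmemA] at hω
    obtain ⟨hn, hlt⟩ := hω
    have hne : ∀ t, t < n → c t ω ≠ none := by
      intro t ht
      have h := hlt t ht
      by_cases htT : t ∈ T
      · simp only [hE, if_neg ht.ne, if_pos htT, Set.mem_singleton_iff] at h
        simp [h]
      · simp only [hE, if_neg ht.ne, if_neg htT, hM, Set.mem_setOf_eq] at h
        exact h.1
    have hτn : τ ω = n := by
      rcases lt_trichotomy (τ ω) n with h | h | h
      · exact absurd (hτ ω).1 (hne _ h)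
      · exact h
      · exact absurd hn ((hτ ω).2 n h)
    refine ⟨hτn, ?_⟩
    ext t
    simp only [Finset.mem_filter, Finset.mem_range]
    constructor
    · rintro ⟨ht, hct⟩
      by_contra htT
      have h := hlt t ht
      simp only [hE, if_neg ht.ne, if_neg htT, hM, Set.mem_setOf_eq] at h
      exact h.2 hct
    · intro htT
      have ht : t < n := Finset.mem_range.mp (hT htT)
      have h := hlt t ht
      simp only [hE, if_neg ht.ne, if_pos htT, Set.mem_singleton_iff] at h
      exact ⟨ht, h⟩
  -- decomposition of the event
  have hdecomp : {ω | x ω = m}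
      = ⋃ n, ⋃ T ∈ Finset.powersetCard m (Finset.range n), A n T := by
    ext ω
    simp only [Set.mem_setOf_eq, Set.mem_iUnion]
    constructor
    · intro hxm
      refine ⟨τ ω, (Finset.range (τ ω)).filter (fun t => c t ω = some i),
        ⟨Finset.mem_powersetCard.mpr ⟨Finset.filter_subset _ _, (hx ω).symm.trans hxm⟩, ?_⟩⟩
      rw [hmemA]
      refine ⟨(hτ ω).1, fun t ht => ?_⟩
      by_cases hti : c t ω = some i
      · have htT : t ∈ (Finset.range (τ ω)).filter (fun t => c t ω = some i) := by
          simp [Finset.mem_filter, Finset.mem_range, ht, hti]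
        simp only [hE, if_neg ht.ne, if_pos htT, Set.mem_singleton_iff]
        exact hti
      · have htT : t ∉ (Finset.range (τ ω)).filter (fun t => c t ω = some i) := by
          simp [Finset.mem_filter, hti]
        simp only [hE, if_neg ht.ne, if_neg htT, hM, Set.mem_setOf_eq]
        exact ⟨(hτ ω).2 t ht, hti⟩
    · rintro ⟨n, T, hT, hω⟩
      rw [Finset.mem_powersetCard] at hT
      obtain ⟨hτn, hfil⟩ := hkey n T hT.1 ω hω
      rw [hx, hτn, hfil, hT.2]
  -- measurability
  have hAmeas : ∀ n T, MeasurableSet (A n T) := by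
    intro n T
    rw [hA]
    exact Finset.measurableSet_biInter _
      (fun t _ => hmeas t MeasurableSpace.measurableSet_top)
  -- single step probabilities
  have hμpre_i : ∀ t, μ (c t ⁻¹' {some i}) = ENNReal.ofReal piR := by
    intro t
    have hset : c t ⁻¹' {some i} = {ω | c t ω = some i} := rfl
    rw [hset, (hdist t).1 i hi]
  have hμpre_0 : ∀ t, μ (c t ⁻¹' {none}) = ENNReal.ofReal p0R := by
    intro t
    have hset : c t ⁻¹' {none} = {ω | c t ω = none} := rfl
    rw [hset, (hdist t).2]
  have hμpre_M : ∀ t, μ (c t ⁻¹' M) = ENNReal.ofReal qR := by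
    intro t
    have hUnion : c t ⁻¹' M = ⋃ j ∈ (S.erase i), {ω | c t ω = some j} := by
      ext ω
      simp only [Set.mem_preimage, hM, Set.mem_setOf_eq, Set.mem_iUnion, Finset.mem_erase]
      constructor
      · rintro ⟨h1, h2⟩
        match hc : c t ω with
        | none => exact absurd hc h1
        | some j =>
          exact ⟨j, ⟨fun hj => h2 (by rw [hc, hj]), hsupp t ω j hc⟩, rfl⟩
      · rintro ⟨j, ⟨hji, _⟩, hc⟩
        refine ⟨by simp [hc], ?_⟩
        rw [hc]
        simp [hji]
    rw [hUnion, measure_biUnion_finset ?_ ?_]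
    · rw [Finset.sum_congr rfl (fun j hj => (hdist t).1 j (Finset.mem_of_mem_erase hj)),
        ← ENNReal.ofReal_sum_of_nonneg (fun j _ => div_nonneg (hv j) hV1.le),
        hqR, Finset.sum_div]
    · intro a ha b hb hab
      simp only [Function.onFun, Set.disjoint_left]
      intro ω h1 h2
      simp only [Set.mem_setOf_eq] at h1 h2
      rw [h1] at h2
      exact hab (Option.some_injective _ h2)
    · intro j hj
      have hset : {ω : Ω | c t ω = some j} = c t ⁻¹' {some j} := rfl
      rw [hset]
      exact hmeas t MeasurableSpace.measurableSet_top
  -- measure of A n T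
  have hμA : ∀ n (T : Finset ℕ), T ⊆ Finset.range n → T.card = m →
      μ (A n T) = ENNReal.ofReal piR ^ m * ENNReal.ofReal qR ^ (n - m)
        * ENNReal.ofReal p0R := by
    intro n T hTsub hTcard
    have hprod := hind.measure_inter_preimage_eq_mul (Finset.range (n+1))
      (sets := E n T) (fun t _ => MeasurableSpace.measurableSet_top)
    rw [hA]
    simp only []
    rw [hprod, Finset.range_add_one, Finset.prod_insert Finset.notMem_range_self]
    have h1 : μ (c n ⁻¹' E n T n) = ENNReal.ofReal p0R := by
      simp only [hE, if_pos rfl]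
      exact hμpre_0 n
    rw [h1]
    have h2 : ∀ t ∈ Finset.range n, μ (c t ⁻¹' E n T t)
        = if t ∈ T then ENNReal.ofReal piR else ENNReal.ofReal qR := by
      intro t ht
      have htn : t ≠ n := (Finset.mem_range.mp ht).ne
      by_cases htT : t ∈ T
      · simp only [hE, if_neg htn, if_pos htT]
        exact hμpre_i t
      · simp only [hE, if_neg htn, if_neg htT]
        exact hμpre_M t
    rw [Finset.prod_congr rfl h2, ← Finset.prod_sdiff hTsub]
    rw [Finset.prod_congr rfl (fun t ht => if_neg (Finset.mem_sdiff.mp ht).2),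
      Finset.prod_congr rfl (fun t ht => if_pos ht)]
    rw [Finset.prod_const, Finset.prod_const, Finset.card_sdiff_of_subset hTsub,
      Finset.card_range, hTcard]
    ring
  -- outer disjointness
  have hDdisj : Pairwise (Function.onFun Disjoint
      (fun n => ⋃ T ∈ Finset.powersetCard m (Finset.range n), A n T)) := by
    intro n n' hnn'
    simp only [Function.onFun, Set.disjoint_left]
    intro ω hω hω'
    simp only [Set.mem_iUnion] at hω hω'
    obtain ⟨T, hT, hωA⟩ := hω
    obtain ⟨T', hT', hωA'⟩ := hω'
    rw [Finset.mem_powersetCard] at hT hT'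
    exact hnn' (((hkey n T hT.1 ω hωA).1).symm.trans ((hkey n' T' hT'.1 ω hωA').1))
  -- inner measure
  have hinner : ∀ n, μ (⋃ T ∈ Finset.powersetCard m (Finset.range n), A n T)
      = (n.choose m : ENNReal) * (ENNReal.ofReal piR ^ m
          * ENNReal.ofReal qR ^ (n - m) * ENNReal.ofReal p0R) := by
    intro n
    have hdisjT : (↑(Finset.powersetCard m (Finset.range n)) : Set (Finset ℕ)).PairwiseDisjoint
        (A n) := by
      intro T hT T' hT' hTT'
      simp only [Finset.mem_coe, Finset.mem_powersetCard] at hT hT'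
      simp only [Function.onFun, Set.disjoint_left]
      intro ω hωA hωA'
      exact hTT' (((hkey n T hT.1 ω hωA).2).symm.trans ((hkey n T' hT'.1 ω hωA').2))
    rw [measure_biUnion_finset hdisjT (fun T _ => hAmeas n T)]
    have hcongr : ∑ T ∈ Finset.powersetCard m (Finset.range n), μ (A n T)
        = ∑ _T ∈ Finset.powersetCard m (Finset.range n),
            (ENNReal.ofReal piR ^ m * ENNReal.ofReal qR ^ (n - m) * ENNReal.ofReal p0R) :=
      Finset.sum_congr rfl (fun T hT => by
        rw [Finset.mem_powersetCard] at hT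
        exact hμA n T hT.1 hT.2)
    rw [hcongr, Finset.sum_const, Finset.card_powersetCard, Finset.card_range, nsmul_eq_mul]
  rw [hdecomp, measure_iUnion hDdisj
    (fun n => (Finset.powersetCard m (Finset.range n)).measurableSet_biUnion
      (fun T _ => hAmeas n T))]
  simp only [hinner]
  rw [aux_geom_tsum m piR qR p0R hq0 hpi0 hp00 hq1]
  congr 1
  have h1q : 1 - qR = (1 + v i) / (1 + V) := by
    rw [hqR]
    field_simp
    linarith [hVsplit]
  rw [h1q, hpiR, hp0R]
  have hne1 : (1 + V) ≠ 0 := hV1.ne'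
  have hne2 : (1 + v i) ≠ 0 := hvi1.ne'
  rw [div_pow, div_pow, div_pow, pow_succ, pow_succ]
  field_simp
end
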